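/- For every ε > 0, every graph G on n vertices admits an edge partition E = E₀ ∪ E₁ ∪ … ∪ E_k such that |E₀| ≤ ε n², k ≤ 50 ε⁻², and for each 1 ≤ i ≤ k the subgraph with edge set E_i has diameter at most 3. -/

import Mathlib

/-- The subgraph spanned by the edge set `E'` (on the vertices covered by `E'`)
has diameter at most `d`. -/
def EdgeSetDiamLE {V : Type*} (E' : Set (Sym2 V)) (d : ℕ) : Prop :=
  ∀ a b : V, a ∈ (SimpleGraph.fromEdgeSet E').support →
    b ∈ (SimpleGraph.fromEdgeSet E').support →
    (SimpleGraph.fromEdgeSet E').edist a b ≤ d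


open Finset

namespace Stmt4Aux

variable {V : Type*} [Fintype V] [DecidableEq V]

/-- The piece extracted around the edge `{u,v}`: all edges of `H` touching `u` or `v`,
together with all edges of `H` between `N(u)` and `N(v)`. -/
noncomputable def piece (H : Finset (Sym2 V)) (u v : V) : Finset (Sym2 V) :=
  H.filter (fun e =>
    u ∈ e ∨ v ∈ e ∨ ∃ a b : V, e = s(a, b) ∧ s(u, a) ∈ H ∧ s(v, b) ∈ H)

lemma piece_subset (H : Finset (Sym2 V)) (u v : V) : piece H u v ⊆ H :=
  Finset.filter_subset _ _

lemma adj_edist_le_one {G : SimpleGraph V} {a b : V} (h : G.Adj a b) :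
    G.edist a b ≤ 1 := by
  have := SimpleGraph.edist_le (SimpleGraph.Walk.cons h SimpleGraph.Walk.nil)
  simpa using this

lemma piece_diam (H : Finset (Sym2 V)) (hnd : ∀ e ∈ H, ¬ e.IsDiag) (u v : V)
    (huv : s(u, v) ∈ H) :
    EdgeSetDiamLE (↑(piece H u v) : Set (Sym2 V)) 3 := by
  classical
  intro x y hx hy
  set GP := SimpleGraph.fromEdgeSet (↑(piece H u v) : Set (Sym2 V)) with hGP
  have huvne : u ≠ v := by
    intro h; exact hnd _ huv (by simp [h])
  have huvP : s(u, v) ∈ piece H u v := by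
    refine Finset.mem_filter.mpr ⟨huv, Or.inl ?_⟩
    simp
  have hadjuv : GP.Adj u v := by
    rw [hGP, SimpleGraph.fromEdgeSet_adj]
    exact ⟨by exact_mod_cast huvP, huvne⟩
  -- every support vertex is at edist ≤ 1 from u or from v
  have hub : ∀ w, w ∈ GP.support → GP.edist w u ≤ 1 ∨ GP.edist w v ≤ 1 := by
    intro w hw
    obtain ⟨w₂, hadj⟩ := (SimpleGraph.mem_support GP).mp hw
    rw [hGP, SimpleGraph.fromEdgeSet_adj] at hadj
    obtain ⟨hmem, hne⟩ := hadj
    have hmem' : s(w, w₂) ∈ piece H u v := by exact_mod_cast hmem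
    obtain ⟨hH, hcond⟩ := Finset.mem_filter.mp hmem'
    -- helper: if s(w,h) ∈ piece and w ≠ h then edist w h ≤ 1
    have step : ∀ h : V, s(w, h) ∈ piece H u v → w ≠ h → GP.edist w h ≤ 1 := by
      intro h hmemP hwh
      refine adj_edist_le_one ?_
      rw [hGP, SimpleGraph.fromEdgeSet_adj]
      exact ⟨by exact_mod_cast hmemP, hwh⟩
    rcases hcond with hu | hv | ⟨a, b, heq, hua, hvb⟩
    · rcases Sym2.mem_iff.mp hu with h1 | h2
      · left; rw [← h1]; simp
      · left
        refine step u ?_ ?_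
        · rw [show s(w, u) = s(w, w₂) by rw [h2], ]; exact hmem'
        · rw [h2]; exact hne
    · rcases Sym2.mem_iff.mp hv with h1 | h2
      · right; rw [← h1]; simp
      · right
        refine step v ?_ ?_
        · rw [show s(w, v) = s(w, w₂) by rw [h2]]; exact hmem'
        · rw [h2]; exact hne
    · rcases Sym2.eq_iff.mp heq with ⟨hwa, -⟩ | ⟨hwb, -⟩
      · -- w = a, so s(u,w) ∈ H, hence in the piece
        left
        have huw : s(u, w) ∈ H := by rw [hwa]; exact hua
        have hneq : u ≠ w := fun h => hnd _ huw (by simp [h])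
        refine step u ?_ (Ne.symm hneq)
        refine Finset.mem_filter.mpr ⟨by rwa [Sym2.eq_swap], Or.inl ?_⟩
        simp
      · right
        have hvw : s(v, w) ∈ H := by rw [hwb]; exact hvb
        have hneq : v ≠ w := fun h => hnd _ hvw (by simp [h])
        refine step v ?_ (Ne.symm hneq)
        refine Finset.mem_filter.mpr ⟨by rwa [Sym2.eq_swap], Or.inr (Or.inl ?_)⟩
        simp
  -- combine
  have hxh := hub x hx
  have hyh := hub y hy
  have huv1 : GP.edist u v ≤ 1 := adj_edist_le_one hadjuv
  have hvu1 : GP.edist v u ≤ 1 := by rwa [SimpleGraph.edist_comm]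
  have tri : ∀ h h' : V, GP.edist x h ≤ 1 → GP.edist h h' ≤ 1 → GP.edist y h' ≤ 1 →
      GP.edist x y ≤ (3 : ℕ) := by
    intro h h' h1 h2 h3
    have t1 : GP.edist x y ≤ GP.edist x h + GP.edist h h' + GP.edist h' y := by
      calc GP.edist x y ≤ GP.edist x h' + GP.edist h' y := SimpleGraph.edist_triangle
        _ ≤ (GP.edist x h + GP.edist h h') + GP.edist h' y := by
              gcongr
              exact SimpleGraph.edist_triangle
    have h3' : GP.edist h' y ≤ 1 := by rwa [SimpleGraph.edist_comm]
    calc GP.edist x y ≤ GP.edist x h + GP.edist h h' + GP.edist h' y := t1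
      _ ≤ 1 + 1 + 1 := by gcongr
      _ = (3 : ℕ) := by norm_num
  rcases hxh with h1 | h1 <;> rcases hyh with h2 | h2
  · exact tri u u h1 (by simp) h2
  · exact tri u v h1 huv1 h2
  · exact tri v u h1 hvu1 h2
  · exact tri v v h1 (by simp) h2

end Stmt4Aux

namespace Stmt4Aux

variable {V : Type*} [Fintype V] [DecidableEq V]

/-- Indicator of an edge. -/
def ind (H : Finset (Sym2 V)) (x y : V) : ℕ := if s(x, y) ∈ H then 1 else 0

lemma ind_symm (H : Finset (Sym2 V)) (x y : V) : ind H x y = ind H y x := by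
  unfold ind
  rw [Sym2.eq_swap]

/-- Degree. -/
def dg (H : Finset (Sym2 V)) (x : V) : ℕ := ∑ y, ind H x y

/-- The set of ordered adjacent pairs. -/
def opairs (H : Finset (Sym2 V)) : Finset (V × V) :=
  (Finset.univ ×ˢ Finset.univ).filter (fun p => s(p.1, p.2) ∈ H)

lemma sum_dg (H : Finset (Sym2 V)) : ∑ x, dg H x = (opairs H).card := by
  unfold dg ind opairs
  rw [← Finset.sum_product']
  rw [Finset.card_filter]

lemma card_opairs (H : Finset (Sym2 V)) (hnd : ∀ e ∈ H, ¬ e.IsDiag) :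
    (opairs H).card = 2 * H.card := by
  have hmaps : ∀ p ∈ opairs H, Sym2.mk p.1 p.2 ∈ H := by
    intro p hp
    exact (Finset.mem_filter.mp hp).2
  rw [Finset.card_eq_sum_card_fiberwise hmaps]
  rw [Finset.sum_congr rfl (g := fun _ => 2), Finset.sum_const, smul_eq_mul, mul_comm]
  intro e he
  induction e with
  | _ α β =>
    have hne : α ≠ β := fun h => hnd _ he (by simp [h])
    have : (opairs H).filter (fun p => Sym2.mk p.1 p.2 = s(α, β)) = {(α, β), (β, α)} := by
      ext p
      simp only [Finset.mem_filter, Finset.mem_insert, Finset.mem_singleton, opairs,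
        Finset.mem_product, Finset.mem_univ, true_and]
      constructor
      · rintro ⟨-, hpe⟩
        rcases Sym2.eq_iff.mp hpe with ⟨h1, h2⟩ | ⟨h1, h2⟩
        · left; exact Prod.ext h1 h2
        · right; exact Prod.ext h1 h2
      · rintro (rfl | rfl)
        · exact ⟨by simpa using he, rfl⟩
        · refine ⟨by rw [show s((β, α).1, (β, α).2) = s(α, β) from Sym2.eq_swap]; exact he, ?_⟩
          exact Sym2.eq_swap
    rw [this]
    rw [Finset.card_insert_of_notMem (by simp [Prod.ext_iff, hne]), Finset.card_singleton]

/-- Codegree. -/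
def cdg (H : Finset (Sym2 V)) (x y : V) : ℕ := ∑ z, ind H x z * ind H y z

lemma sum_cdg (H : Finset (Sym2 V)) : ∑ x, ∑ y, cdg H x y = ∑ z, (dg H z) ^ 2 := by
  unfold cdg
  calc ∑ x, ∑ y, ∑ z, ind H x z * ind H y z
      = ∑ x, ∑ z, ∑ y, ind H x z * ind H y z :=
        Finset.sum_congr rfl (fun x _ => Finset.sum_comm)
    _ = ∑ z, ∑ x, ∑ y, ind H x z * ind H y z := Finset.sum_comm
    _ = ∑ z, (dg H z) ^ 2 := by
        refine Finset.sum_congr rfl (fun z _ => ?_)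
        rw [← Finset.sum_mul_sum]
        unfold dg
        rw [sq]
        congr 1 <;> exact Finset.sum_congr rfl (fun w _ => ind_symm H w z)

/-- The number of "cherry pairs" based at the ordered pair (u,v). -/
def f4 (H : Finset (Sym2 V)) (u v : V) : ℕ := ∑ p, ∑ q, ind H u p * ind H v q * ind H p q

/-- The 4-walk identity. -/
lemma walk4 (H : Finset (Sym2 V)) :
    ∑ x, ∑ y, (cdg H x y) ^ 2 = ∑ u, ∑ v, ind H u v * f4 H u v := by
  unfold f4
  have lhs_eq : ∀ x y : V, (cdg H x y) ^ 2
      = ∑ p, ∑ q, ind H x p * ind H y p * (ind H x q * ind H y q) := by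
    intro x y
    unfold cdg
    rw [sq, Finset.sum_mul_sum]
  calc ∑ x, ∑ y, (cdg H x y) ^ 2
      = ∑ x, ∑ y, ∑ p, ∑ q, ind H x p * ind H y p * (ind H x q * ind H y q) := by
        exact Finset.sum_congr rfl fun x _ => Finset.sum_congr rfl fun y _ => lhs_eq x y
    _ = ∑ x, ∑ q, ∑ p, ∑ y, ind H x p * ind H y p * (ind H x q * ind H y q) := by
        refine Finset.sum_congr rfl (fun x _ => ?_)
        calc ∑ y, ∑ p, ∑ q, ind H x p * ind H y p * (ind H x q * ind H y q)
            = ∑ p, ∑ y, ∑ q, ind H x p * ind H y p * (ind H x q * ind H y q) :=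
              Finset.sum_comm
          _ = ∑ p, ∑ q, ∑ y, ind H x p * ind H y p * (ind H x q * ind H y q) :=
              Finset.sum_congr rfl (fun p _ => Finset.sum_comm)
          _ = ∑ q, ∑ p, ∑ y, ind H x p * ind H y p * (ind H x q * ind H y q) :=
              Finset.sum_comm
    _ = ∑ u, ∑ v, ind H u v * ∑ p, ∑ q, ind H u p * ind H v q * ind H p q := by
        refine Finset.sum_congr rfl fun x _ => Finset.sum_congr rfl fun q _ => ?_
        rw [Finset.mul_sum]
        refine Finset.sum_congr rfl fun p _ => ?_
        rw [Finset.mul_sum]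
        refine Finset.sum_congr rfl fun y _ => ?_
        rw [show ind H q y = ind H y q from ind_symm H q y,
            show ind H p y = ind H y p from ind_symm H p y]
        ring

lemma f4_le (H : Finset (Sym2 V)) (u v : V) : f4 H u v ≤ 2 * (piece H u v).card := by
  classical
  have hf4 : f4 H u v = ((Finset.univ ×ˢ Finset.univ).filter
      (fun pq : V × V => s(u, pq.1) ∈ H ∧ s(v, pq.2) ∈ H ∧ s(pq.1, pq.2) ∈ H)).card := by
    unfold f4 ind
    rw [← Finset.sum_product']
    rw [Finset.card_filter]
    refine Finset.sum_congr rfl fun pq _ => ?_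
    by_cases h1 : s(u, pq.1) ∈ H <;> by_cases h2 : s(v, pq.2) ∈ H <;>
      by_cases h3 : s(pq.1, pq.2) ∈ H <;> simp [h1, h2, h3]
  rw [hf4]
  refine Finset.card_le_mul_card_image_of_maps_to
    (f := fun pq : V × V => Sym2.mk pq.1 pq.2) ?_ 2 ?_
  · intro pq hpq
    simp only [Finset.mem_filter, Finset.mem_product] at hpq
    obtain ⟨-, h1, h2, h3⟩ := hpq
    exact Finset.mem_filter.mpr ⟨h3, Or.inr (Or.inr ⟨pq.1, pq.2, rfl, h1, h2⟩)⟩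
  · intro e he
    induction e with
    | _ α β =>
      refine (Finset.card_le_card (t := {(α, β), (β, α)}) ?_).trans ?_
      · intro p hp
        simp only [Finset.mem_filter] at hp
        rcases Sym2.eq_iff.mp hp.2 with ⟨h1, h2⟩ | ⟨h1, h2⟩
        · simp [Prod.ext_iff, h1, h2]
        · simp [Prod.ext_iff, h1, h2]
      · exact (Finset.card_insert_le _ _).trans (by simp)

end Stmt4Aux

namespace Stmt4Aux

variable {V : Type*} [Fintype V] [DecidableEq V]

set_option maxHeartbeats 1000000 in
lemma extract (H : Finset (Sym2 V)) (hnd : ∀ e ∈ H, ¬ e.IsDiag) (hne : H.Nonempty) :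
    ∃ u v : V, s(u, v) ∈ H ∧
      4 * (H.card : ℝ) ^ 3 ≤ ((piece H u v).card : ℝ) * (Fintype.card V : ℝ) ^ 4 := by
  classical
  set n : ℝ := (Fintype.card V : ℝ) with hn
  set m : ℝ := (H.card : ℝ) with hm
  have hm1 : 1 ≤ m := by
    have := Finset.card_pos.mpr hne
    rw [hm]; exact_mod_cast this
  have hn0 : (0:ℝ) ≤ n := by positivity
  -- the set of ordered adjacent pairs is nonempty
  have hopne : (opairs H).Nonempty := by
    obtain ⟨e, he⟩ := hne
    induction e with
    | _ α β =>
      exact ⟨(α, β), Finset.mem_filter.mpr ⟨by simp, he⟩⟩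
  obtain ⟨p₀, hp₀mem, hp₀max⟩ :=
    Finset.exists_max_image (opairs H) (fun p => f4 H p.1 p.2) hopne
  obtain ⟨u, v⟩ := p₀
  have huv : s(u, v) ∈ H := (Finset.mem_filter.mp hp₀mem).2
  refine ⟨u, v, huv, ?_⟩
  set M2 : ℝ := ∑ z, ((dg H z : ℝ)) ^ 2 with hM2
  set W : ℕ := ∑ x, ∑ y, (cdg H x y) ^ 2 with hW
  set F : ℝ := (f4 H u v : ℝ) with hF
  set pc : ℝ := ((piece H u v).card : ℝ) with hpc
  have hM2nn : 0 ≤ M2 := by positivity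
  have hpcnn : 0 ≤ pc := by rw [hpc]; exact Nat.cast_nonneg _
  -- (2m)^2 ≤ n * M2
  have i1 : (2 * m) ^ 2 ≤ n * M2 := by
    have := sq_sum_le_card_mul_sum_sq (s := (Finset.univ : Finset V))
      (f := fun z => ((dg H z : ℝ)))
    have hsum : ∑ z, ((dg H z : ℝ)) = 2 * m := by
      rw [hm]
      rw [← Nat.cast_sum]
      rw [sum_dg H, card_opairs H hnd]
      push_cast; ring
    rw [hsum] at this
    simpa [hn, Finset.card_univ] using this
  -- M2^2 ≤ n^2 * W
  have i2 : M2 ^ 2 ≤ n ^ 2 * (W : ℝ) := by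
    have := sq_sum_le_card_mul_sum_sq (s := (Finset.univ : Finset (V × V)))
      (f := fun p => ((cdg H p.1 p.2 : ℝ)))
    have hsum : ∑ p : V × V, ((cdg H p.1 p.2 : ℝ)) = M2 := by
      rw [Fintype.sum_prod_type (f := fun p : V × V => ((cdg H p.1 p.2 : ℝ)))]
      rw [hM2]
      rw [show ∑ z, ((dg H z : ℝ)) ^ 2 = ((∑ z, (dg H z) ^ 2 : ℕ) : ℝ) by push_cast; rfl]
      rw [← sum_cdg H]
      push_cast; rfl
    have hsum2 : ∑ p : V × V, ((cdg H p.1 p.2 : ℝ)) ^ 2 = (W : ℝ) := by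
      rw [Fintype.sum_prod_type (f := fun p : V × V => ((cdg H p.1 p.2 : ℝ)) ^ 2), hW]
      push_cast; rfl
    rw [hsum, hsum2] at this
    calc M2 ^ 2 ≤ (Finset.univ : Finset (V × V)).card * (W : ℝ) := this
      _ = n ^ 2 * (W : ℝ) := by
          rw [Finset.card_univ, Fintype.card_prod, hn]
          push_cast; ring
  -- W ≤ 2m * F
  have i3 : (W : ℝ) ≤ 2 * m * F := by
    have hWsum : W = ∑ p ∈ opairs H, f4 H p.1 p.2 := by
      rw [hW, walk4 H, ← Finset.sum_product'
        (f := fun u v => ind H u v * f4 H u v)]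
      unfold opairs
      rw [Finset.sum_filter]
      refine Finset.sum_congr rfl fun p _ => ?_
      unfold ind
      by_cases h : s(p.1, p.2) ∈ H <;> simp [h]
    have hWle : W ≤ (opairs H).card * f4 H u v := by
      rw [hWsum]
      calc ∑ p ∈ opairs H, f4 H p.1 p.2 ≤ ∑ _p ∈ opairs H, f4 H u v :=
            Finset.sum_le_sum (fun p hp => hp₀max p hp)
        _ = (opairs H).card * f4 H u v := by rw [Finset.sum_const, smul_eq_mul]
    rw [card_opairs H hnd] at hWle
    have := (Nat.cast_le (α := ℝ)).mpr hWle
    push_cast at this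
    rw [hm, hF]
    push_cast
    linarith
  -- F ≤ 2 * pc
  have i4 : F ≤ 2 * pc := by
    have := f4_le H u v
    rw [hF, hpc]
    exact_mod_cast this
  -- combine
  have hFnn : 0 ≤ F := by rw [hF]; positivity
  have c1 : 16 * m ^ 4 ≤ n ^ 4 * (W : ℝ) := by
    have sq1 : ((2 * m) ^ 2) ^ 2 ≤ (n * M2) ^ 2 := by
      have h0 : (0:ℝ) ≤ (2 * m) ^ 2 := by positivity
      exact pow_le_pow_left₀ h0 i1 2
    have : (n * M2) ^ 2 = n ^ 2 * M2 ^ 2 := by ring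
    rw [this] at sq1
    have sq2 : n ^ 2 * M2 ^ 2 ≤ n ^ 2 * (n ^ 2 * (W:ℝ)) := by
      have hn2 : (0:ℝ) ≤ n ^ 2 := by positivity
      exact mul_le_mul_of_nonneg_left i2 hn2
    calc 16 * m ^ 4 = ((2 * m) ^ 2) ^ 2 := by ring
      _ ≤ n ^ 2 * M2 ^ 2 := sq1
      _ ≤ n ^ 2 * (n ^ 2 * (W:ℝ)) := sq2
      _ = n ^ 4 * (W : ℝ) := by ring
  have c2 : n ^ 4 * (W : ℝ) ≤ 4 * m * (pc * n ^ 4) := by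
    have hn4 : (0:ℝ) ≤ n ^ 4 := by positivity
    have : (W : ℝ) ≤ 2 * m * (2 * pc) := by
      calc (W:ℝ) ≤ 2 * m * F := i3
        _ ≤ 2 * m * (2 * pc) := by
            have h2m : (0:ℝ) ≤ 2 * m := by linarith
            exact mul_le_mul_of_nonneg_left i4 h2m
    calc n ^ 4 * (W : ℝ) ≤ n ^ 4 * (2 * m * (2 * pc)) := mul_le_mul_of_nonneg_left this hn4
      _ = 4 * m * (pc * n ^ 4) := by ring
  have main : 4 * m * (4 * m ^ 3) ≤ 4 * m * (pc * n ^ 4) := by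
    calc 4 * m * (4 * m ^ 3) = 16 * m ^ 4 := by ring
      _ ≤ n ^ 4 * (W : ℝ) := c1
      _ ≤ 4 * m * (pc * n ^ 4) := c2
  have h4m : (0:ℝ) < 4 * m := by linarith
  exact le_of_mul_le_mul_left main h4m

end Stmt4Aux

namespace Stmt4Aux

variable {V : Type*} [Fintype V] [DecidableEq V]

set_option maxHeartbeats 1000000 in
lemma main_induction (ε : ℝ) (hε : 0 < ε) :
    ∀ (N : ℕ) (H : Finset (Sym2 V)), H.card ≤ N → (∀ e ∈ H, ¬ e.IsDiag) →
    ∃ l : List (Finset (Sym2 V)),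
      (∀ p ∈ l, p ⊆ H ∧ EdgeSetDiamLE (↑p : Set (Sym2 V)) 3) ∧
      l.Pairwise Disjoint ∧
      ((H \ l.foldr (· ∪ ·) ∅).card : ℝ) ≤ ε * (Fintype.card V : ℝ) ^ 2 ∧
      ((l = [] ∧ (H.card : ℝ) ≤ ε * (Fintype.card V : ℝ) ^ 2) ∨
        (ε * (Fintype.card V : ℝ) ^ 2 < (H.card : ℝ) ∧
          (l.length : ℝ) ≤ 1 + (4 * ε ^ 2)⁻¹
            - (Fintype.card V : ℝ) ^ 4 / (4 * (H.card : ℝ) ^ 2))) := by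
  intro N
  induction N with
  | zero =>
    intro H hcard hnd
    have hH : H = ∅ := Finset.card_eq_zero.mp (Nat.le_zero.mp hcard)
    subst hH
    refine ⟨[], by simp, by simp, ?_, Or.inl ⟨rfl, ?_⟩⟩
    · simp only [List.foldr_nil, Finset.sdiff_empty, Finset.card_empty, Nat.cast_zero]
      positivity
    · simp only [Finset.card_empty, Nat.cast_zero]
      positivity
  | succ N ih =>
    intro H hcard hnd
    by_cases hsmall : (H.card : ℝ) ≤ ε * (Fintype.card V : ℝ) ^ 2
    · refine ⟨[], by simp, by simp, ?_, Or.inl ⟨rfl, hsmall⟩⟩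
      simpa using hsmall
    · push_neg at hsmall
      have hεn2 : (0:ℝ) ≤ ε * (Fintype.card V : ℝ) ^ 2 := by positivity
      have hne : H.Nonempty := by
        rw [← Finset.card_pos]
        by_contra h
        push_neg at h
        have hc0 : H.card = 0 := Nat.le_zero.mp h
        rw [hc0] at hsmall
        simp only [Nat.cast_zero] at hsmall
        linarith
      have hn1 : (1:ℝ) ≤ (Fintype.card V : ℝ) := by
        obtain ⟨e, he⟩ := hne
        have : Nonempty V := ⟨e.out.1⟩
        have := Fintype.card_pos_iff.mpr this
        exact_mod_cast this
      obtain ⟨u, v, huv, hineq⟩ := extract H hnd hne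
      set P := piece H u v with hP
      have hPsub : P ⊆ H := piece_subset H u v
      have hPmem : s(u, v) ∈ P := by
        rw [hP]
        exact Finset.mem_filter.mpr ⟨huv, Or.inl (by simp)⟩
      have hPpos : 0 < P.card := Finset.card_pos.mpr ⟨_, hPmem⟩
      have hcard' : (H \ P).card ≤ N := by
        have h1 : (H \ P).card = H.card - P.card := Finset.card_sdiff_of_subset hPsub
        have h2 : P.card ≤ H.card := Finset.card_le_card hPsub
        omega
      obtain ⟨l', hl'sub, hl'pw, hl'left, hl'len⟩ :=
        ih (H \ P) hcard' (fun e he => hnd e (Finset.mem_sdiff.mp he).1)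
      have hUnion : H \ (P :: l').foldr (· ∪ ·) ∅ = (H \ P) \ l'.foldr (· ∪ ·) ∅ := by
        ext x
        simp only [List.foldr_cons, Finset.mem_sdiff, Finset.mem_union]
        tauto
      refine ⟨P :: l', ?_, ?_, ?_, ?_⟩
      · intro p hp
        rcases List.mem_cons.mp hp with rfl | hp'
        · exact ⟨hPsub, piece_diam H hnd u v huv⟩
        · obtain ⟨hsub, hdiam⟩ := hl'sub p hp'
          exact ⟨hsub.trans (Finset.sdiff_subset), hdiam⟩
      · refine List.Pairwise.cons ?_ hl'pw
        intro p hp'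
        have hsub : p ⊆ H \ P := (hl'sub p hp').1
        exact (Finset.disjoint_sdiff.mono_right hsub)
      · rw [hUnion]
        exact hl'left
      · right
        refine ⟨hsmall, ?_⟩
        -- real-number bookkeeping
        set n : ℝ := (Fintype.card V : ℝ) with hn
        set m : ℝ := (H.card : ℝ) with hm
        set pc : ℝ := (P.card : ℝ) with hpc
        have hm'eq : ((H \ P).card : ℝ) = m - pc := by
          rw [Finset.card_sdiff_of_subset hPsub]
          have h2 : P.card ≤ H.card := Finset.card_le_card hPsub
          push_cast [h2]
          ring
        have hpc1 : (1:ℝ) ≤ pc := by rw [hpc]; exact_mod_cast hPpos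
        have hm1 : (1:ℝ) ≤ m := by
          have := Finset.card_pos.mpr hne
          rw [hm]; exact_mod_cast this
        have hmpos : (0:ℝ) < m := by linarith
        have hεpos2 : (0:ℝ) < ε * n ^ 2 := by
          have : (0:ℝ) < n := by linarith
          positivity
        rcases hl'len with ⟨hl'nil, hsm'⟩ | ⟨hbig', hlen'⟩
        · -- l' = [], so length = 1
          subst hl'nil
          simp only [List.length_cons, List.length_nil, Nat.cast_one, Nat.cast_zero]
          have key : n ^ 4 / (4 * m ^ 2) ≤ (4 * ε ^ 2)⁻¹ := by
            rw [div_le_iff₀ (by positivity), inv_eq_one_div, div_mul_eq_mul_div,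
              le_div_iff₀ (by positivity)]
            have h1 : ε * n ^ 2 ≤ m := le_of_lt hsmall
            nlinarith [sq_nonneg (ε * n ^ 2), sq_nonneg m, mul_le_mul h1 h1 (le_of_lt hεpos2) (le_of_lt hmpos)]
          linarith [key]
        · -- l' nonempty case with its bound
          have hm'pos : (0:ℝ) < m - pc := by
            rw [← hm'eq]
            calc (0:ℝ) < ε * n ^ 2 := hεpos2
              _ < ((H \ P).card : ℝ) := hbig'
          have hm'lt : m - pc < m := by linarith
          have hkey : n ^ 4 / (4 * m ^ 2) + 1 ≤ n ^ 4 / (4 * (m - pc) ^ 2) := by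
            have hpcn4 : 4 * m ^ 3 ≤ pc * n ^ 4 := hineq
            have hdiff : n ^ 4 / (4 * (m - pc) ^ 2) - n ^ 4 / (4 * m ^ 2)
                = n ^ 4 * (m ^ 2 - (m - pc) ^ 2) / (4 * m ^ 2 * (m - pc) ^ 2) := by
              field_simp
            have hnum : 4 * m ^ 2 * (m - pc) ^ 2 ≤ n ^ 4 * (m ^ 2 - (m - pc) ^ 2) := by
              have e1 : m ^ 2 - (m - pc) ^ 2 = pc * (m + (m - pc)) := by ring
              rw [e1]
              have h4 : 4 * m ^ 4 ≤ pc * n ^ 4 * m :=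
                calc 4 * m ^ 4 = (4 * m ^ 3) * m := by ring
                  _ ≤ (pc * n ^ 4) * m := by
                      exact mul_le_mul_of_nonneg_right hpcn4 (le_of_lt hmpos)
              have hsq : (m - pc) ^ 2 ≤ m ^ 2 :=
                pow_le_pow_left₀ (le_of_lt hm'pos) (le_of_lt hm'lt) 2
              have h5 : 4 * m ^ 2 * (m - pc) ^ 2 ≤ 4 * m ^ 4 := by
                have := mul_le_mul_of_nonneg_left hsq (show (0:ℝ) ≤ 4 * m ^ 2 by positivity)
                calc 4 * m ^ 2 * (m - pc) ^ 2 ≤ 4 * m ^ 2 * m ^ 2 := this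
                  _ = 4 * m ^ 4 := by ring
              have hextra : (0:ℝ) ≤ n ^ 4 * (pc * (m - pc)) := by
                have hn4 : (0:ℝ) ≤ n ^ 4 := by positivity
                exact mul_nonneg hn4 (mul_nonneg (by linarith) (le_of_lt hm'pos))
              have h6 : pc * n ^ 4 * m ≤ n ^ 4 * (pc * (m + (m - pc))) := by
                nlinarith [hextra]
              linarith
            have hden : (0:ℝ) < 4 * m ^ 2 * (m - pc) ^ 2 := by positivity
            have : (1:ℝ) ≤ n ^ 4 * (m ^ 2 - (m - pc) ^ 2) / (4 * m ^ 2 * (m - pc) ^ 2) := by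
              rw [le_div_iff₀ hden]
              linarith
            linarith [hdiff ▸ this]
          have hlenc : ((P :: l').length : ℝ) = (l'.length : ℝ) + 1 := by
            simp
          rw [hlenc]
          have : ((H \ P).card : ℝ) = m - pc := hm'eq
          rw [this] at hlen'
          linarith
  
end Stmt4Aux

namespace Stmt4Aux

variable {α : Type*} [DecidableEq α]

lemma mem_foldr_union {l : List (Finset α)} {x : α} :
    x ∈ l.foldr (· ∪ ·) ∅ ↔ ∃ p ∈ l, x ∈ p := by
  induction l with
  | nil => simp
  | cons p l ih => simp [ih]

lemma subset_foldr {l : List (Finset α)} {p : Finset α} (hp : p ∈ l) :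
    p ⊆ l.foldr (· ∪ ·) ∅ :=
  fun x hx => mem_foldr_union.mpr ⟨p, hp, hx⟩

end Stmt4Aux

set_option maxHeartbeats 1000000 in
/-- Every graph G on n vertices admits an edge partition
E = E₀ ∪ E₁ ∪ … ∪ E_k with |E₀| ≤ εn², k ≤ 50ε⁻², and each E_i (i ≥ 1) of
diameter at most 3. -/
theorem stmt_4 {V : Type*} [Fintype V] [DecidableEq V] (G : SimpleGraph V)
    [DecidableRel G.Adj] (ε : ℝ) (hε : 0 < ε) (n : ℕ) (hn : n = Fintype.card V) :
    ∃ (k : ℕ) (E : Fin (k + 1) → Finset (Sym2 V)),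
      (k : ℝ) ≤ 50 * ε⁻¹ ^ 2 ∧
      (∀ i j, i ≠ j → Disjoint (E i) (E j)) ∧
      Finset.univ.biUnion E = G.edgeFinset ∧
      ((E 0).card : ℝ) ≤ ε * (n : ℝ) ^ 2 ∧
      ∀ i, i ≠ 0 → EdgeSetDiamLE (↑(E i) : Set (Sym2 V)) 3 := by
  classical
  subst hn
  have hndH : ∀ e ∈ G.edgeFinset, ¬ e.IsDiag :=
    fun e he => SimpleGraph.not_isDiag_of_mem_edgeSet G (SimpleGraph.mem_edgeFinset.mp he)
  obtain ⟨l, hsub, hpw, hleft, hlen⟩ :=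
    Stmt4Aux.main_induction (V := V) ε hε G.edgeFinset.card G.edgeFinset le_rfl hndH
  set H := G.edgeFinset with hH
  set U := l.foldr (· ∪ ·) ∅ with hU
  refine ⟨l.length, fun i => Fin.cases (H \ U) (fun j => l.get j) i, ?_, ?_, ?_, ?_, ?_⟩
  · -- the bound on k
    rcases hlen with ⟨hnil, -⟩ | ⟨hbig, hb⟩
    · subst hnil
      simp only [List.length_nil, Nat.cast_zero]
      positivity
    · have hed : 2 * H.card ≤ Fintype.card V * Fintype.card V := by
        rw [← Stmt4Aux.card_opairs H hndH]
        calc (Stmt4Aux.opairs H).card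
            ≤ ((Finset.univ : Finset V) ×ˢ (Finset.univ : Finset V)).card :=
              Finset.card_filter_le _ _
          _ = Fintype.card V * Fintype.card V := by
              rw [Finset.card_product]; simp
      have hedR : 2 * (H.card : ℝ) ≤ (Fintype.card V : ℝ) ^ 2 := by
        have := (Nat.cast_le (α := ℝ)).mpr hed
        push_cast at this
        nlinarith [this]
      have hmpos : (0:ℝ) < (H.card : ℝ) := by
        have h0 : (0:ℝ) ≤ ε * (Fintype.card V : ℝ) ^ 2 := by positivity
        linarith
      have hn2pos : (0:ℝ) < (Fintype.card V : ℝ) ^ 2 := by linarith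
      have h2e : 2 * ε * (Fintype.card V : ℝ) ^ 2 < (Fintype.card V : ℝ) ^ 2 := by
        linarith
      have hehalf : ε < 1 / 2 := by nlinarith [h2e, hn2pos]
      have hq : (0:ℝ) < ε ^ 2 := by positivity
      have h1e : (1:ℝ) ≤ (ε ^ 2)⁻¹ := by
        rw [inv_eq_one_div, le_div_iff₀ hq]
        nlinarith [hehalf, hε]
      have hb' : (l.length : ℝ) ≤ 1 + (4 * ε ^ 2)⁻¹ := by
        have hnn : (0:ℝ) ≤ (Fintype.card V : ℝ) ^ 4 / (4 * (H.card : ℝ) ^ 2) := by positivity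
        linarith
      have hie : (4 * ε ^ 2)⁻¹ = 4⁻¹ * (ε ^ 2)⁻¹ := by
        rw [mul_inv]
      rw [show (ε⁻¹ ^ 2 : ℝ) = (ε ^ 2)⁻¹ from inv_pow ε 2]
      rw [hie] at hb'
      linarith
  · -- disjointness
    intro i j hij
    rcases Fin.eq_zero_or_eq_succ i with rfl | ⟨i', rfl⟩ <;>
      rcases Fin.eq_zero_or_eq_succ j with rfl | ⟨j', rfl⟩
    · exact absurd rfl hij
    · simp only [Fin.cases_zero, Fin.cases_succ]
      exact Finset.sdiff_disjoint.mono_right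
        (Stmt4Aux.subset_foldr (l.get_mem _))
    · simp only [Fin.cases_zero, Fin.cases_succ]
      exact (Finset.sdiff_disjoint.mono_right
        (Stmt4Aux.subset_foldr (l.get_mem _))).symm
    · simp only [Fin.cases_succ]
      have hne' : i' ≠ j' := by
        intro h; exact hij (by rw [h])
      rcases lt_or_gt_of_ne hne' with hlt | hgt
      · exact List.pairwise_iff_get.mp hpw i' j' hlt
      · exact (List.pairwise_iff_get.mp hpw j' i' hgt).symm
  · -- the union
    ext e
    simp only [Finset.mem_biUnion, Finset.mem_univ, true_and]
    constructor
    · rintro ⟨i, hi⟩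
      rcases Fin.eq_zero_or_eq_succ i with rfl | ⟨j, rfl⟩
      · simp only [Fin.cases_zero] at hi
        exact (Finset.mem_sdiff.mp hi).1
      · simp only [Fin.cases_succ] at hi
        exact (hsub _ (l.get_mem _)).1 hi
    · intro he
      by_cases hu : e ∈ U
      · obtain ⟨p, hp, hep⟩ := Stmt4Aux.mem_foldr_union.mp hu
        obtain ⟨j, rfl⟩ := List.mem_iff_get.mp hp
        exact ⟨j.succ, by simp only [Fin.cases_succ]; exact hep⟩
      · exact ⟨0, by simp only [Fin.cases_zero]; exact Finset.mem_sdiff.mpr ⟨he, hu⟩⟩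
  · -- the size of E 0
    simpa using hleft
  · -- the diameter bound
    intro i hi
    rcases Fin.eq_zero_or_eq_succ i with rfl | ⟨j, rfl⟩
    · exact absurd rfl hi
    · simp only [Fin.cases_succ]
      exact (hsub _ (l.get_mem _)).2
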